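/- Let u : [0,T] → H be absolutely continuous with u' ∈ L²(0,T;H), and for a time step τ > 0 with T/τ ∈ ℕ define the piecewise constant interpolant ū_τ(t) = u(kτ) for t ∈ ((k−1)τ, kτ] and the piecewise affine interpolant u_τ agreeing with u at nodes kτ. Then sup_{t∈(0,T]} ‖ū_τ(t) − u_τ(t)‖ ≤ τ^{1/2} ‖u'‖_{L²(0,T;H)}. -/

import Mathlib

open MeasureTheory

lemma cs_aux {a b : ℝ} (hab : a ≤ b) {f : ℝ → ℝ} (hnn : ∀ x, 0 ≤ f x)
    (hf : IntegrableOn f (Set.Icc a b))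
    (hsq : IntegrableOn (fun x => f x ^ 2) (Set.Icc a b)) :
    ∫ x in Set.Icc a b, f x ≤
      (b - a) ^ ((1:ℝ)/2) * (∫ x in Set.Icc a b, f x ^ 2) ^ ((1:ℝ)/2) := by
  set A := ∫ x in Set.Icc a b, f x with hA
  set B := ∫ x in Set.Icc a b, f x ^ 2 with hB
  have hmeas : (volume (Set.Icc a b)).toReal = b - a := by
    rw [Real.volume_Icc, ENNReal.toReal_ofReal (by linarith)]
  have hBnn : 0 ≤ B := setIntegral_nonneg measurableSet_Icc (fun x _ => sq_nonneg _)
  have hkey : ∀ ε : ℝ, 0 < ε → A ≤ (ε * B + ε⁻¹ * (b - a)) / 2 := by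
    intro ε hε
    have h1 : A ≤ ∫ x in Set.Icc a b, (ε * f x ^ 2 + ε⁻¹) / 2 := by
      apply integral_mono hf
      · apply Integrable.div_const
        exact ((hsq.const_mul ε).add (integrableOn_const
          (by rw [Real.volume_Icc]; exact ENNReal.ofReal_ne_top)))
      · intro x
        rw [le_div_iff₀ (by norm_num : (0:ℝ) < 2), ← mul_le_mul_iff_right₀ hε]
        have hinv : ε * ε⁻¹ = 1 := mul_inv_cancel₀ hε.ne'
        nlinarith [sq_nonneg (ε * f x - 1)]
    have h2 : ∫ x in Set.Icc a b, (ε * f x ^ 2 + ε⁻¹) / 2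
        = (ε * B + ε⁻¹ * (b - a)) / 2 := by
      rw [integral_div, integral_add (hsq.const_mul ε)
        (integrableOn_const (by rw [Real.volume_Icc]; exact ENNReal.ofReal_ne_top)),
        integral_const_mul, integral_const, smul_eq_mul, measureReal_restrict_apply_univ, measureReal_def, hmeas]
      ring
    rw [h2] at h1; exact h1
  rcases eq_or_lt_of_le hBnn with hB0 | hB0
  · -- B = 0
    have hAnn : 0 ≤ A := setIntegral_nonneg measurableSet_Icc (fun x _ => hnn x)
    have hA0 : A ≤ 0 := by
      by_contra h
      push_neg at h
      have hε : (0:ℝ) < (b - a) / A + 1 := by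
        have : 0 ≤ (b - a) / A := div_nonneg (by linarith) h.le
        linarith
      have hkey' := hkey _ hε
      rw [← hB0] at hkey'
      simp only [mul_zero, zero_add] at hkey'
      have hexp : ((b - a) / A + 1) * A = (b - a) + A := by field_simp
      have hlt : ((b - a) / A + 1)⁻¹ * (b - a) < A := by
        rw [inv_mul_lt_iff₀ hε, hexp]
        linarith
      linarith
    have : A = 0 := le_antisymm hA0 hAnn
    rw [this]
    exact mul_nonneg (Real.rpow_nonneg (by linarith) _) (Real.rpow_nonneg hBnn _)
  · -- B > 0
    rcases eq_or_lt_of_le hab with rfl | hab'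
    · have : A = 0 := by
        rw [hA]
        rw [show Set.Icc a a = {a} from Set.Icc_self a]
        simp [integral_singleton]
      rw [this, sub_self, Real.zero_rpow (by norm_num)]
      simp
    · set x := Real.sqrt (b - a) with hx
      set y := Real.sqrt B with hy
      have hxpos : 0 < x := Real.sqrt_pos.mpr (by linarith)
      have hypos : 0 < y := Real.sqrt_pos.mpr hB0
      have hx2 : x ^ 2 = b - a := Real.sq_sqrt (by linarith)
      have hy2 : y ^ 2 = B := Real.sq_sqrt hBnn
      have := hkey (x / y) (by positivity)
      have heq : (x / y) * B + (x / y)⁻¹ * (b - a) = 2 * (x * y) := by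
        rw [← hx2, ← hy2]; field_simp; ring
      rw [heq] at this
      have hAxy : A ≤ x * y := by linarith
      calc A ≤ x * y := hAxy
        _ = (b - a) ^ ((1:ℝ)/2) * B ^ ((1:ℝ)/2) := by
            rw [hx, hy, Real.sqrt_eq_rpow, Real.sqrt_eq_rpow]

/-- The piecewise constant and piecewise affine interpolants of an `H¹(0,T;H)` function
differ by at most `τ^{1/2} ‖u'‖_{L²(0,T;H)}`. -/
theorem interpolants_close
    (H : Type*) [NormedAddCommGroup H] [InnerProductSpace ℝ H] [CompleteSpace H]
    (T τ : ℝ) (hT : 0 < T) (hτ : 0 < τ) (N : ℕ) (hN : T = N * τ)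
    (u u' ubar ulin : ℝ → H)
    (hfund : ∀ t₁ t₂, t₁ ∈ Set.Icc 0 T → t₂ ∈ Set.Icc 0 T →
      u t₂ - u t₁ = ∫ s in t₁..t₂, u' s)
    (hL2 : IntegrableOn (fun s => ‖u' s‖ ^ 2) (Set.Icc 0 T))
    (hbar : ∀ k : ℕ, 1 ≤ k → k ≤ N → ∀ t ∈ Set.Ioc ((k - 1 : ℝ) * τ) (k * τ),
      ubar t = u (k * τ))
    (hlin : ∀ k : ℕ, 1 ≤ k → k ≤ N → ∀ t ∈ Set.Ioc ((k - 1 : ℝ) * τ) (k * τ),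
      ulin t = ((t - (k - 1 : ℝ) * τ) / τ) • u (k * τ) + ((k * τ - t) / τ) • u ((k - 1 : ℝ) * τ)) :
    ∀ t ∈ Set.Ioc (0:ℝ) T,
      ‖ubar t - ulin t‖ ≤ τ ^ ((1:ℝ)/2) *
        (∫ s in Set.Icc 0 T, ‖u' s‖ ^ 2) ^ ((1:ℝ)/2) := by
  intro t ht
  obtain ⟨ht0, htT⟩ := ht
  set k : ℕ := ⌈t / τ⌉₊ with hkdef
  have hk0 : 0 < k := Nat.ceil_pos.mpr (div_pos ht0 hτ)
  have hk1 : 1 ≤ k := hk0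
  have hkN : k ≤ N := Nat.ceil_le.mpr (by rw [div_le_iff₀ hτ]; rw [hN] at htT; exact htT)
  have hkcast : (1:ℝ) ≤ (k:ℝ) := Nat.one_le_cast.mpr hk1
  have htb : t ≤ (k:ℝ) * τ := by
    have h := Nat.le_ceil (t / τ)
    calc t = (t/τ) * τ := by field_simp
      _ ≤ (k:ℝ) * τ := mul_le_mul_of_nonneg_right h hτ.le
  have hta : ((k:ℝ) - 1) * τ < t := by
    have h1 : ((k:ℝ)) < t/τ + 1 := Nat.ceil_lt_add_one (by positivity)
    have h2 : (k:ℝ) - 1 < t/τ := by linarith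
    calc ((k:ℝ)-1) * τ < (t/τ) * τ := mul_lt_mul_of_pos_right h2 hτ
      _ = t := by field_simp
  set a : ℝ := ((k:ℝ) - 1) * τ with hadef
  set b : ℝ := (k:ℝ) * τ with hbdef
  have hba : b - a = τ := by rw [hadef, hbdef]; ring
  have ha0 : 0 ≤ a := mul_nonneg (by linarith) hτ.le
  have hbT : b ≤ T := by
    rw [hN]; exact mul_le_mul_of_nonneg_right (Nat.cast_le.mpr hkN) hτ.le
  have hab : a ≤ b := le_of_lt (lt_of_lt_of_le hta htb)
  have htmem : t ∈ Set.Ioc a b := ⟨hta, htb⟩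
  have hsub : Set.Icc a b ⊆ Set.Icc 0 T := Set.Icc_subset_Icc ha0 hbT
  have hint2 : IntegrableOn (fun s => ‖u' s‖ ^ 2) (Set.Icc a b) := hL2.mono_set hsub
  have hmeasN : AEStronglyMeasurable (fun s => ‖u' s‖) (volume.restrict (Set.Icc a b)) := by
    have h2 := hint2.aestronglyMeasurable
    have h3 := Real.continuous_sqrt.comp_aestronglyMeasurable h2
    convert h3 using 1
    case e'_4 => rfl
    ext s
    exact (Real.sqrt_sq (norm_nonneg _)).symm
  have hconst : IntegrableOn (fun _ : ℝ => (1:ℝ)) (Set.Icc a b) :=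
    integrableOn_const (by rw [Real.volume_Icc]; exact ENNReal.ofReal_ne_top)
  have hint1 : IntegrableOn (fun s => ‖u' s‖) (Set.Icc a b) := by
    have hg : IntegrableOn (fun s => (‖u' s‖ ^ 2 + 1) / 2) (Set.Icc a b) :=
      (hint2.add hconst).div_const 2
    refine hg.mono' hmeasN (ae_of_all _ fun s => ?_)
    rw [Real.norm_eq_abs, abs_of_nonneg (norm_nonneg _)]
    nlinarith [sq_nonneg (‖u' s‖ - 1)]
  rw [hbar k hk1 hkN t htmem, hlin k hk1 hkN t htmem]
  have hαβ : (t - a)/τ = 1 - (b - t)/τ := by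
    field_simp
    linarith [hba]
  have hdiff : u b - (((t - a)/τ) • u b + ((b - t)/τ) • u a)
      = ((b - t)/τ) • (u b - u a) := by
    rw [hαβ]; module
  rw [hdiff]
  have hβ0 : 0 ≤ (b - t)/τ := div_nonneg (by linarith) hτ.le
  have hβ1 : (b - t)/τ ≤ 1 := by rw [div_le_one hτ]; linarith
  calc ‖((b - t)/τ) • (u b - u a)‖ = ((b - t)/τ) * ‖u b - u a‖ := by
        rw [norm_smul, Real.norm_eq_abs, abs_of_nonneg hβ0]
    _ ≤ ‖u b - u a‖ := by nlinarith [norm_nonneg (u b - u a)]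
    _ = ‖∫ s in a..b, u' s‖ := by
        rw [hfund a b ⟨ha0, hab.trans hbT⟩ ⟨ha0.trans hab, hbT⟩]
    _ ≤ ∫ s in a..b, ‖u' s‖ := intervalIntegral.norm_integral_le_integral_norm hab
    _ = ∫ s in Set.Icc a b, ‖u' s‖ := by
        rw [intervalIntegral.integral_of_le hab, ← integral_Icc_eq_integral_Ioc]
    _ ≤ (b - a) ^ ((1:ℝ)/2) * (∫ s in Set.Icc a b, ‖u' s‖ ^ 2) ^ ((1:ℝ)/2) :=
        cs_aux hab (fun x => norm_nonneg _) hint1 hint2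
    _ ≤ τ ^ ((1:ℝ)/2) * (∫ s in Set.Icc 0 T, ‖u' s‖ ^ 2) ^ ((1:ℝ)/2) := by
        rw [hba]
        refine mul_le_mul_of_nonneg_left ?_ (Real.rpow_nonneg hτ.le _)
        refine Real.rpow_le_rpow
          (setIntegral_nonneg measurableSet_Icc fun x _ => sq_nonneg _) ?_ (by norm_num)
        exact setIntegral_mono_set hL2 (ae_of_all _ (fun x => sq_nonneg _))
          (HasSubset.Subset.eventuallyLE hsub)
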